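/- Let H ∈ ℚ[[t]] be the formal power series with constant coefficient 0 whose n-th coefficient equals binom(3n−2, n−1)/n for every n ≥ 1 (so H = t + 2t² + 7t³ + 30t⁴ + 143t⁵ + ⋯). Then H³ − 2H² + H = t; in other words, H is the solution of the form t + O(t²) of the algebraic equation H³ − 2H² + H − t = 0, whose coefficients give the Hilbert series of the operad of L-algebras (the 1-poset operad). -/

import Mathlib

open PowerSeries

private lemma coeff_mul_eq_zero' {j : ℕ} (F G : PowerSeries ℚ)
    (hG : ∀ i, i ≤ j → PowerSeries.coeff i G = 0) :
    PowerSeries.coeff j (F * G) = 0 := by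
  rw [coeff_mul]
  refine Finset.sum_eq_zero fun p hp => ?_
  rw [Finset.HasAntidiagonal.mem_antidiagonal] at hp
  rw [hG p.2 (by omega), mul_zero]

private lemma coeff_mul_eq_top' {j : ℕ} (F G : PowerSeries ℚ)
    (hG : ∀ i, i < j → PowerSeries.coeff i G = 0) :
    PowerSeries.coeff j (F * G) = PowerSeries.constantCoeff F * PowerSeries.coeff j G := by
  rw [coeff_mul, Finset.sum_eq_single (0, j)]
  · rw [coeff_zero_eq_constantCoeff]
  · intro p hp hne
    rw [Finset.HasAntidiagonal.mem_antidiagonal] at hp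
    have h2 : p.2 < j := by
      rcases Nat.lt_or_ge p.2 j with h | h
      · exact h
      · exfalso; apply hne
        have e1 : p.1 = 0 := by omega
        have e2 : p.2 = j := by omega
        ext <;> simp [e1, e2]
    rw [hG _ h2, mul_zero]
  · intro h; exact absurd (by simp) h

private lemma choose_rec (m : ℕ) :
    (2 * (2 * m + 3) * (m + 1) * (Nat.choose (3 * m + 4) (m + 1)) : ℚ)
      = 3 * (3 * m + 2) * (3 * m + 4) * (Nat.choose (3 * m + 1) m) := by
  have e1 := Nat.choose_mul_succ_eq (3 * m + 1) m
  have e2 := Nat.choose_mul_succ_eq (3 * m + 2) m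
  have e3 := Nat.choose_mul_succ_eq (3 * m + 3) m
  have e4 := Nat.choose_succ_right_eq (3 * m + 4) m
  rw [show 3 * m + 1 + 1 = 3 * m + 2 by omega, show 3 * m + 2 - m = 2 * m + 2 by omega] at e1
  rw [show 3 * m + 2 + 1 = 3 * m + 3 by omega, show 3 * m + 3 - m = 2 * m + 3 by omega] at e2
  rw [show 3 * m + 3 + 1 = 3 * m + 4 by omega, show 3 * m + 4 - m = 2 * m + 4 by omega] at e3
  rw [show 3 * m + 4 - m = 2 * m + 4 by omega] at e4
  have c1 := congrArg (Nat.cast : ℕ → ℚ) e1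
  have c2 := congrArg (Nat.cast : ℕ → ℚ) e2
  have c3 := congrArg (Nat.cast : ℕ → ℚ) e3
  have c4 := congrArg (Nat.cast : ℕ → ℚ) e4
  push_cast at c1 c2 c3 c4
  linear_combination (2 * (2 * (m:ℚ) + 3)) * c4 - (2 * (2 * (m:ℚ) + 3)) * c3
    - (2 * (3 * (m:ℚ) + 4)) * c2 - (3 * (3 * (m:ℚ) + 4)) * c1

/-- Let `H ∈ ℚ⟦t⟧` have constant coefficient `0` and `n`-th coefficient
`binom (3n-2) (n-1) / n` for every `n ≥ 1` (so
`H = t + 2t² + 7t³ + 30t⁴ + 143t⁵ + ⋯`). Then `H³ - 2H² + H = t`: `H` is the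
solution of the form `t + O(t²)` of `H³ - 2H² + H - t = 0`, whose coefficients
give the Hilbert series of the operad of L-algebras (the 1-poset operad). -/
theorem LAlgebra_hilbert_series (H : PowerSeries ℚ)
    (h0 : PowerSeries.coeff 0 H = 0)
    (hn : ∀ n : ℕ, 1 ≤ n →
      PowerSeries.coeff n H = (Nat.choose (3 * n - 2) (n - 1) : ℚ) / n) :
    H ^ 3 - 2 * H ^ 2 + H = PowerSeries.X := by
  have h0' : PowerSeries.constantCoeff H = 0 := by rwa [← coeff_zero_eq_constantCoeff]
  have h1 : PowerSeries.coeff 1 H = 1 := by simpa using hn 1 le_rfl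
  -- the two-term coefficient recurrence
  have hrec : ∀ n : ℕ, 2 * (n + 1) * (2 * n + 1) * PowerSeries.coeff (n + 1) H
      = (27 * (n : ℚ) ^ 2 - 3) * PowerSeries.coeff n H + (if n = 0 then 2 else 0) := by
    intro n
    cases n with
    | zero => simp [h0, h1]
    | succ m =>
      rw [hn (m + 2) (by omega), hn (m + 1) (by omega)]
      rw [show 3 * (m + 2) - 2 = 3 * m + 4 by omega, show (m + 2) - 1 = m + 1 by omega,
        show 3 * (m + 1) - 2 = 3 * m + 1 by omega, show (m + 1) - 1 = m by omega,
        if_neg (Nat.succ_ne_zero m)]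
      have key := choose_rec m
      have hm2 : ((m:ℚ) + 2) ≠ 0 := by positivity
      have hm1 : ((m:ℚ) + 1) ≠ 0 := by positivity
      push_cast
      field_simp
      linear_combination ((m:ℚ) + 2) * key
  set D1 := d⁄dX ℚ H with hD1
  set D2 := d⁄dX ℚ D1 with hD2
  -- the linear ODE satisfied by H
  have hLH2 : (C 4 * X - C 27 * X ^ 2) * D2 + (C 2 - C 27 * X) * D1
      + C 3 * H = C 2 := by
    have form : (C 4 * X - C 27 * X ^ 2) * D2 + (C 2 - C 27 * X) * D1 + C 3 * H
        = C 4 * (X * D2) - C 27 * (X * (X * D2)) + C 2 * D1 - C 27 * (X * D1)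
          + C 3 * H := by ring
    rw [form]
    ext n
    match n with
    | 0 =>
      simp only [map_add, map_sub, coeff_C_mul, coeff_zero_X_mul, hD1, coeff_derivative,
        coeff_C, if_pos rfl]
      simp [h0, h1]
    | 1 =>
      have r := hrec 1
      norm_num at r
      simp only [map_add, map_sub, coeff_C_mul, coeff_succ_X_mul, coeff_zero_X_mul, hD2, hD1,
        coeff_derivative, coeff_C]
      norm_num
      linear_combination r
    | (m + 2) =>
      have r := hrec (m + 2)
      rw [if_neg (by omega)] at r
      push_cast at r
      simp only [map_add, map_sub, coeff_C_mul, coeff_succ_X_mul, hD2, hD1,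
        coeff_derivative, coeff_C, if_neg (Nat.succ_ne_zero _)]
      push_cast
      linear_combination r
  have hLH2' : (4 * X - 27 * X ^ 2) * D2 + (2 - 27 * X) * D1 + 3 * H = (2 : ℚ⟦X⟧) := by
    simpa only [map_ofNat] using hLH2
  set w : ℚ⟦X⟧ := 3 * H ^ 2 - 4 * H + 1 with hw
  set E : ℚ⟦X⟧ := H ^ 3 - 2 * H ^ 2 + H - X with hE
  set A : ℚ⟦X⟧ := -(2 - 27 * X) * w ^ 2 + (4 * X - 27 * X ^ 2) * (6 * H - 4) * ((w * D1 - 1) + 2)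
    with hA
  set B : ℚ⟦X⟧ := (162 * H - 108) * X
      + ((162 * H - 108) * (H ^ 3 - 2 * H ^ 2 + H) - 27 * w ^ 2 - 24 * H + 16) with hB
  set F : ℚ⟦X⟧ := (4 - 27 * X) * w ^ 2 with hF
  have d2zero : d⁄dX ℚ (2 : ℚ⟦X⟧) = 0 := by
    rw [← map_ofNat (C (R := ℚ)) 2, derivative_C]
  have d3zero : d⁄dX ℚ (3 : ℚ⟦X⟧) = 0 := by
    rw [← map_ofNat (C (R := ℚ)) 3, derivative_C]
  have d4zero : d⁄dX ℚ (4 : ℚ⟦X⟧) = 0 := by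
    rw [← map_ofNat (C (R := ℚ)) 4, derivative_C]
  have d6zero : d⁄dX ℚ (6 : ℚ⟦X⟧) = 0 := by
    rw [← map_ofNat (C (R := ℚ)) 6, derivative_C]
  have hdE : d⁄dX ℚ E = w * D1 - 1 := by
    rw [hE, hw, hD1]
    simp only [map_sub, map_add, Derivation.leibniz, Derivation.leibniz_pow, derivative_X,
      d2zero, d3zero, d4zero, d6zero, smul_eq_mul, nsmul_eq_mul]
    push_cast
    ring
  have hdE2 : d⁄dX ℚ (d⁄dX ℚ E) = w * D2 + (6 * H - 4) * D1 ^ 2 := by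
    rw [hdE, hw, hD2, hD1]
    simp only [map_sub, map_add, map_one, Derivation.leibniz, Derivation.leibniz_pow,
      derivative_X, d2zero, d3zero, d4zero, d6zero, smul_eq_mul, nsmul_eq_mul, Derivation.map_one_eq_zero]
    push_cast
    ring
  have master : X * (F * (d⁄dX ℚ (d⁄dX ℚ E))) = A * (d⁄dX ℚ E) + B * E := by
    rw [hdE2, hdE, hA, hB, hE, hw, hF]
    linear_combination ((3 * H ^ 2 - 4 * H + 1) ^ 3) * hLH2'
  -- constant coefficients
  have cw : PowerSeries.constantCoeff w = 1 := by
    rw [hw]; simp [h0', constantCoeff_X]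
  have cF : PowerSeries.constantCoeff F = 4 := by
    rw [hF]; simp [cw, constantCoeff_X, map_ofNat]
  have cD1 : PowerSeries.constantCoeff D1 = 1 := by
    rw [hD1, ← coeff_zero_eq_constantCoeff, coeff_derivative]
    simpa using h1
  have cA : PowerSeries.constantCoeff A = -2 := by
    rw [hA]
    simp [cw, cD1, constantCoeff_X, map_ofNat]
  -- all coefficients of E vanish
  have main : ∀ n : ℕ, PowerSeries.coeff n E = 0 := by
    intro n
    induction n using Nat.strong_induction_on with
    | _ n ih =>
      match n with
      | 0 =>
        rw [hE, coeff_zero_eq_constantCoeff]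
        simp [h0', constantCoeff_X]
      | (k + 1) =>
        have hm := congrArg (PowerSeries.coeff k) master
        rw [map_add] at hm
        have hBE : PowerSeries.coeff k (B * E) = 0 := by
          apply coeff_mul_eq_zero'
          intro i hi
          exact ih i (by omega)
        have hAE : PowerSeries.coeff k (A * (d⁄dX ℚ E))
            = -2 * (PowerSeries.coeff (k + 1) E * (k + 1)) := by
          rw [coeff_mul_eq_top' _ _ (fun i hi => by
            rw [coeff_derivative, ih (i + 1) (by omega), zero_mul]), cA, coeff_derivative]
        rw [hBE, hAE, add_zero] at hm
        match k with
        | 0 =>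
          rw [coeff_zero_X_mul] at hm
          push_cast at hm
          linarith
        | (j + 1) =>
          rw [coeff_succ_X_mul] at hm
          have hFE : PowerSeries.coeff j (F * (d⁄dX ℚ (d⁄dX ℚ E)))
              = 4 * (PowerSeries.coeff (j + 2) E * (j + 2) * (j + 1)) := by
            rw [coeff_mul_eq_top' _ _ (fun i hi => by
              rw [coeff_derivative, coeff_derivative, ih (i + 2) (by omega), zero_mul,
                zero_mul]), cF, coeff_derivative, coeff_derivative]
            push_cast
            ring
          rw [hFE] at hm
          set T := PowerSeries.coeff (j + 2) E with hT
          have hc : ((4 * ((j:ℚ) + 2) * ((j:ℚ) + 1) + 2 * ((j:ℚ) + 2))) * T = 0 := by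
            push_cast at hm
            linear_combination hm
          have hcne : ((4 * ((j:ℚ) + 2) * ((j:ℚ) + 1) + 2 * ((j:ℚ) + 2))) ≠ 0 := by positivity
          exact (mul_eq_zero.mp hc).resolve_left hcne
  have hE0 : E = 0 := by
    ext n
    rw [main n, map_zero]
  rw [hE] at hE0
  exact sub_eq_zero.mp hE0
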